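/- For every w ∈ W, the set S_w⁻ is empty if and only if w ∈ W_{J₀}. -/

import Mathlib

open scoped RealInnerProductSpace

variable {V : Type*} [NormedAddCommGroup V] [InnerProductSpace ℝ V]

/-- The orthogonal reflection `s_α` in the hyperplane perpendicular to `α`,
`s_α x = x - (2⟪x,α⟫/⟪α,α⟫) • α`, as a linear map. -/
noncomputable def reflMap (α : V) : V →ₗ[ℝ] V where
  toFun x := x - (2 * ⟪x, α⟫ / ⟪α, α⟫) • α
  map_add' x y := by
    try dsimp only
    rw [inner_add_left,
      show 2 * (⟪x, α⟫ + ⟪y, α⟫) / ⟪α, α⟫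
          = 2 * ⟪x, α⟫ / ⟪α, α⟫ + 2 * ⟪y, α⟫ / ⟪α, α⟫ by ring,
      add_smul]
    abel
  map_smul' c x := by
    try dsimp only
    rw [RingHom.id_apply, real_inner_smul_left, smul_sub,
      show 2 * (c * ⟪x, α⟫) / ⟪α, α⟫ = c * (2 * ⟪x, α⟫ / ⟪α, α⟫) by ring,
      mul_smul]

/-- A finite reduced (crystallographic) root system `R` spanning `V`. -/
structure IsRootSystem (R : Set V) : Prop where
  finite : R.Finite
  zero_not_mem : (0 : V) ∉ R
  span_top : Submodule.span ℝ R = ⊤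
  refl_mem : ∀ α ∈ R, ∀ β ∈ R, reflMap α β ∈ R
  reduced : ∀ α ∈ R, ∀ c : ℝ, c • α ∈ R → c = 1 ∨ c = -1
  crystallographic : ∀ α ∈ R, ∀ β ∈ R, ∃ n : ℤ, 2 * ⟪β, α⟫ / ⟪α, α⟫ = (n : ℝ)

/-- The set `R⁺` of positive roots with respect to a base `Δ`: the roots that are
nonnegative integer combinations of the elements of `Δ`. -/
def posRoots (R Δ : Set V) : Set V :=
  {α ∈ R | α ∈ AddSubmonoid.closure Δ}

/-- `Δ` is a base (system of simple roots) of the root system `R`: a linearly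
independent subset of `R` such that every root lies in exactly one of `R⁺`, `-R⁺`. -/
structure IsBase (R Δ : Set V) : Prop where
  subset : Δ ⊆ R
  indep : LinearIndependent ℝ ((↑) : Δ → V)
  pos_xor_neg : ∀ α ∈ R, Xor' (α ∈ posRoots R Δ) (-α ∈ posRoots R Δ)

/-- The subgroup of `GL(V)` generated by the reflections `s_α` for `α ∈ S`.
For `S = R` this is the Weyl group `W`; for `S = J ⊆ Δ` this is the subgroup `W_J`. -/
def weylGroup (S : Set V) : Subgroup (V ≃ₗ[ℝ] V) :=
  Subgroup.closure {g | ∃ α ∈ S, ∀ x, g x = reflMap α x}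

/-- The set `R_J := R ∩ span_ℝ(J)`. -/
def rootsIn (R J : Set V) : Set V :=
  R ∩ (Submodule.span ℝ J : Submodule ℝ V)

/-- `S_w⁺ := {α ∈ Δ : w·α ∈ R⁺ and w·α ∉ R_{J₀}}`. -/
def Spos (R Δ J₀ : Set V) (w : V ≃ₗ[ℝ] V) : Set V :=
  {α ∈ Δ | w α ∈ posRoots R Δ ∧ w α ∉ rootsIn R J₀}

/-- `S_w⁻ := {α ∈ Δ : w·α ∈ -R⁺ and w·α ∉ R_{J₀}}`. -/
def Sneg (R Δ J₀ : Set V) (w : V ≃ₗ[ℝ] V) : Set V :=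
  {α ∈ Δ | -(w α) ∈ posRoots R Δ ∧ w α ∉ rootsIn R J₀}


section Aux

lemma reflMap_apply (α x : V) : reflMap α x = x - (2 * ⟪x, α⟫ / ⟪α, α⟫) • α := rfl

lemma reflMap_inner (α x y : V) : ⟪reflMap α x, reflMap α y⟫ = ⟪x, y⟫ := by
  by_cases hα : α = 0
  · simp [reflMap_apply, hα]
  · have hA : ⟪α, α⟫ ≠ 0 := fun h => hα (inner_self_eq_zero.mp h)
    simp only [reflMap_apply, inner_sub_left, inner_sub_right, real_inner_smul_left,
      real_inner_smul_right]
    rw [real_inner_comm α y, real_inner_comm α x]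
    field_simp
    ring

lemma reflMap_invol (α x : V) : reflMap α (reflMap α x) = x := by
  by_cases hα : α = 0
  · simp [reflMap_apply, hα]
  · have hA : ⟪α, α⟫ ≠ 0 := fun h => hα (inner_self_eq_zero.mp h)
    rw [reflMap_apply, reflMap_apply, inner_sub_left, real_inner_smul_left]
    rw [show 2 * (⟪x, α⟫ - 2 * ⟪x, α⟫ / ⟪α, α⟫ * ⟪α, α⟫) / ⟪α, α⟫
        = -(2 * ⟪x, α⟫ / ⟪α, α⟫) by field_simp; ring]
    rw [neg_smul]
    abel

lemma reflMap_neg (α x : V) : reflMap (-α) x = reflMap α x := by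
  rw [reflMap_apply, reflMap_apply, inner_neg_right, inner_neg_left, inner_neg_right, neg_neg,
    smul_neg]
  rw [show 2 * -⟪x, α⟫ / ⟪α, α⟫ = -(2 * ⟪x, α⟫ / ⟪α, α⟫) by ring, neg_smul, neg_neg]

noncomputable def reflEquiv (α : V) : V ≃ₗ[ℝ] V :=
  LinearEquiv.ofLinear (reflMap α) (reflMap α)
    (by ext x; simp [reflMap_invol]) (by ext x; simp [reflMap_invol])

@[simp] lemma reflEquiv_apply (α x : V) : reflEquiv α x = reflMap α x := rfl

lemma reflEquiv_self (α : V) (hα : α ≠ 0) : reflEquiv α α = -α := by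
  have hA : ⟪α, α⟫ ≠ 0 := fun h => hα (inner_self_eq_zero.mp h)
  rw [reflEquiv_apply, reflMap_apply, mul_div_assoc, div_self hA, mul_one, two_smul]
  abel

lemma reflEquiv_inv (α : V) : (reflEquiv α)⁻¹ = reflEquiv α := by
  ext x
  have h : reflEquiv α (reflEquiv α x) = x := reflMap_invol α x
  calc (reflEquiv α)⁻¹ x = (reflEquiv α)⁻¹ (reflEquiv α (reflEquiv α x)) := by rw [h]
    _ = reflEquiv α x := (reflEquiv α).symm_apply_apply _

lemma reflEquiv_mul_self (α : V) : reflEquiv α * reflEquiv α = 1 := by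
  ext x; exact reflMap_invol α x

/-- The generating set of reflections for `weylGroup S`. -/
def gens (S : Set V) : Set (V ≃ₗ[ℝ] V) := {g | ∃ α ∈ S, ∀ x, g x = reflMap α x}

lemma reflEquiv_mem_gens {S : Set V} {α : V} (hα : α ∈ S) : reflEquiv α ∈ gens S :=
  ⟨α, hα, fun _ => rfl⟩

lemma gens_eq_reflEquiv {S : Set V} {g : V ≃ₗ[ℝ] V} (hg : g ∈ gens S) :
    ∃ α ∈ S, g = reflEquiv α := by
  obtain ⟨α, hα, h⟩ := hg
  exact ⟨α, hα, by ext x; exact h x⟩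

lemma gens_inv_subset (S : Set V) : (gens S)⁻¹ ⊆ gens S := by
  intro g hg
  obtain ⟨α, hα, h⟩ := gens_eq_reflEquiv hg
  have : g = reflEquiv α := by
    rw [← reflEquiv_inv, ← h, inv_inv]
  rw [this]
  exact reflEquiv_mem_gens hα

lemma mem_weylGroup_iff {S : Set V} {w : V ≃ₗ[ℝ] V} :
    w ∈ weylGroup S ↔ ∃ l : List (V ≃ₗ[ℝ] V), (∀ g ∈ l, g ∈ gens S) ∧ l.prod = w := by
  constructor
  · intro hw
    have h1 : w ∈ (Subgroup.closure (gens S)).toSubmonoid := hw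
    rw [Subgroup.closure_toSubmonoid] at h1
    have h2 : gens S ∪ (gens S)⁻¹ = gens S :=
      Set.union_eq_self_of_subset_right (gens_inv_subset S)
    rw [h2] at h1
    exact Submonoid.exists_list_of_mem_closure h1
  · rintro ⟨l, hl, rfl⟩
    induction l with
    | nil => exact (weylGroup S).one_mem
    | cons g t ih =>
      rw [List.prod_cons]
      exact (weylGroup S).mul_mem (Subgroup.subset_closure (hl g (List.mem_cons_self)))
        (ih fun g hg => hl g (List.mem_cons_of_mem _ hg))

lemma weylGroup_mono {S T : Set V} (h : S ⊆ T) : weylGroup S ≤ weylGroup T :=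
  Subgroup.closure_mono (fun g ⟨α, hα, hg⟩ => ⟨α, h hα, hg⟩)

end Aux


section Aux2
variable {R Δ J : Set V}

/-- A list of generating reflections maps `R` into `R`. -/
lemma listProd_maps_root (hR : IsRootSystem R) (hSR : J ⊆ R) :
    ∀ (l : List (V ≃ₗ[ℝ] V)), (∀ g ∈ l, g ∈ gens J) → ∀ γ ∈ R, l.prod γ ∈ R := by
  intro l
  induction l with
  | nil => intro _ γ hγ; simpa using hγ
  | cons g t ih =>
    intro hl γ hγ
    obtain ⟨α, hα, hg⟩ := hl g (List.mem_cons_self)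
    have ht : t.prod γ ∈ R := ih (fun g hg => hl g (List.mem_cons_of_mem _ hg)) γ hγ
    rw [List.prod_cons]
    show g (t.prod γ) ∈ R
    rw [hg]
    exact hR.refl_mem α (hSR hα) _ ht

lemma weylGroup_maps_root (hR : IsRootSystem R) (hSR : J ⊆ R) {w : V ≃ₗ[ℝ] V}
    (hw : w ∈ weylGroup J) {γ : V} (hγ : γ ∈ R) : w γ ∈ R := by
  obtain ⟨l, hl, rfl⟩ := mem_weylGroup_iff.mp hw
  exact listProd_maps_root hR hSR l hl γ hγ

lemma listProd_inner : ∀ (l : List (V ≃ₗ[ℝ] V)), (∀ g ∈ l, g ∈ gens J) →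
    ∀ x y : V, ⟪l.prod x, l.prod y⟫ = ⟪x, y⟫ := by
  intro l
  induction l with
  | nil => intro _ x y; simp
  | cons g t ih =>
    intro hl x y
    obtain ⟨α, hα, hg⟩ := hl g (List.mem_cons_self)
    rw [List.prod_cons]
    show ⟪g (t.prod x), g (t.prod y)⟫ = ⟪x, y⟫
    rw [hg, hg, reflMap_inner]
    exact ih (fun g hg => hl g (List.mem_cons_of_mem _ hg)) x y

lemma weylGroup_inner {w : V ≃ₗ[ℝ] V} (hw : w ∈ weylGroup J) (x y : V) :
    ⟪w x, w y⟫ = ⟪x, y⟫ := by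
  obtain ⟨l, hl, rfl⟩ := mem_weylGroup_iff.mp hw
  exact listProd_inner l hl x y

/-- Conjugation formula: `s_{wγ} = w s_γ w⁻¹` for `w` an isometry. -/
lemma reflEquiv_conj {w : V ≃ₗ[ℝ] V} (hw : ∀ x y : V, ⟪w x, w y⟫ = ⟪x, y⟫) (γ : V) :
    reflEquiv (w γ) = w * reflEquiv γ * w⁻¹ := by
  ext x
  show reflMap (w γ) x = w (reflMap γ (w⁻¹ x))
  rw [reflMap_apply, reflMap_apply, map_sub, map_smul]
  have h1 : w (w⁻¹ x) = x := w.apply_symm_apply x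
  rw [h1]
  have h2 : ⟪(w⁻¹ x : V), γ⟫ = ⟪x, w γ⟫ := by
    rw [← hw (w⁻¹ x) γ, h1]
  have h3 : ⟪γ, γ⟫ = ⟪w γ, w γ⟫ := (hw γ γ).symm
  rw [h2, h3]

/-- Elements of `W_J` move vectors by elements of `span J`. -/
lemma listProd_sub_mem_span : ∀ (l : List (V ≃ₗ[ℝ] V)), (∀ g ∈ l, g ∈ gens J) →
    ∀ x : V, l.prod x - x ∈ Submodule.span ℝ J := by
  intro l
  induction l with
  | nil => intro _ x; simp
  | cons g t ih =>
    intro hl x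
    obtain ⟨α, hα, hg⟩ := hl g (List.mem_cons_self)
    rw [List.prod_cons]
    show g (t.prod x) - x ∈ Submodule.span ℝ J
    have h1 : g (t.prod x) - t.prod x ∈ Submodule.span ℝ J := by
      rw [hg, reflMap_apply]
      rw [show t.prod x - (2 * ⟪t.prod x, α⟫ / ⟪α, α⟫) • α - t.prod x
          = -((2 * ⟪t.prod x, α⟫ / ⟪α, α⟫) • α) by abel]
      exact Submodule.neg_mem _ (Submodule.smul_mem _ _
        (Submodule.subset_span hα))
    have h2 : t.prod x - x ∈ Submodule.span ℝ J :=
      ih (fun g hg => hl g (List.mem_cons_of_mem _ hg)) x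
    have := Submodule.add_mem _ h1 h2
    rwa [sub_add_sub_cancel] at this

lemma weylGroup_apply_sub_mem_span {w : V ≃ₗ[ℝ] V} (hw : w ∈ weylGroup J) (x : V) :
    w x - x ∈ Submodule.span ℝ J := by
  obtain ⟨l, hl, rfl⟩ := mem_weylGroup_iff.mp hw
  exact listProd_sub_mem_span l hl x

end Aux2

section Module.Basis
variable {R Δ J : Set V} [FiniteDimensional ℝ V]

lemma posRoots_subset_span (hΔ : IsBase R Δ) {γ : V} (hγ : γ ∈ posRoots R Δ) :
    γ ∈ Submodule.span ℝ Δ := by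
  have h : AddSubmonoid.closure Δ ≤ (Submodule.span ℝ Δ).toAddSubmonoid :=
    AddSubmonoid.closure_le.mpr Submodule.subset_span
  exact h hγ.2

lemma root_spans (hR : IsRootSystem R) (hΔ : IsBase R Δ) :
    ⊤ ≤ Submodule.span ℝ (Set.range ((↑) : Δ → V)) := by
  rw [Subtype.range_coe, ← hR.span_top]
  refine Submodule.span_le.mpr ?_
  intro γ hγ
  rcases (hΔ.pos_xor_neg γ hγ).imp (fun h => h.1) (fun h => h.1) with h | h
  · exact posRoots_subset_span hΔ h
  · have := posRoots_subset_span hΔ h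
    simpa using Submodule.neg_mem _ this

/-- A basis of `V` indexed by `Δ`. -/
noncomputable def baseBasis (hR : IsRootSystem R) (hΔ : IsBase R Δ) : Module.Basis Δ ℝ V :=
  Module.Basis.mk hΔ.indep (root_spans hR hΔ)

lemma baseBasis_apply (hR : IsRootSystem R) (hΔ : IsBase R Δ) (i : Δ) :
    baseBasis hR hΔ i = (i : V) := Module.Basis.mk_apply _ _ i

end Module.Basis


section Coord
variable {R Δ J : Set V} [FiniteDimensional ℝ V]

lemma repr_nonneg (hR : IsRootSystem R) (hΔ : IsBase R Δ) {v : V}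
    (hv : v ∈ AddSubmonoid.closure Δ) (i : Δ) : 0 ≤ (baseBasis hR hΔ).repr v i := by
  classical
  induction hv using AddSubmonoid.closure_induction with
  | mem x hx =>
      have hx' : x = baseBasis hR hΔ ⟨x, hx⟩ := (baseBasis_apply hR hΔ ⟨x, hx⟩).symm
      rw [hx', Module.Basis.repr_self, Finsupp.single_apply]
      split <;> norm_num
  | zero => simp
  | add x y _ _ ihx ihy =>
      rw [map_add, Finsupp.add_apply]
      exact add_nonneg ihx ihy

lemma repr_nonneg' (hR : IsRootSystem R) (hΔ : IsBase R Δ) {γ : V}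
    (hγ : γ ∈ posRoots R Δ) (i : Δ) : 0 ≤ (baseBasis hR hΔ).repr γ i :=
  repr_nonneg hR hΔ hγ.2 i

lemma simple_mem_posRoots (hΔ : IsBase R Δ) {α : V} (hα : α ∈ Δ) : α ∈ posRoots R Δ :=
  ⟨hΔ.subset hα, AddSubmonoid.subset_closure hα⟩

lemma not_pos_and_neg (hΔ : IsBase R Δ) {γ : V} (hγR : γ ∈ R)
    (h1 : γ ∈ posRoots R Δ) (h2 : -γ ∈ posRoots R Δ) : False :=
  (hΔ.pos_xor_neg γ hγR).elim (fun h => h.2 h2) (fun h => h.2 h1)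

lemma pos_or_neg (hΔ : IsBase R Δ) {γ : V} (hγ : γ ∈ R) :
    γ ∈ posRoots R Δ ∨ -γ ∈ posRoots R Δ :=
  (hΔ.pos_xor_neg γ hγ).elim (fun h => Or.inl h.1) (fun h => Or.inr h.1)

lemma pos_of_repr_pos (hR : IsRootSystem R) (hΔ : IsBase R Δ) {γ : V} (hγ : γ ∈ R)
    {i : Δ} (h : 0 < (baseBasis hR hΔ).repr γ i) : γ ∈ posRoots R Δ := by
  rcases pos_or_neg hΔ hγ with hp | hp
  · exact hp
  · exfalso
    have := repr_nonneg' hR hΔ hp i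
    rw [map_neg, Finsupp.neg_apply] at this
    linarith

lemma repr_simple (hR : IsRootSystem R) (hΔ : IsBase R Δ) {α : V} (hα : α ∈ Δ) :
    (baseBasis hR hΔ).repr α = Finsupp.single ⟨α, hα⟩ 1 := by
  have hx' : α = baseBasis hR hΔ ⟨α, hα⟩ := (baseBasis_apply hR hΔ ⟨α, hα⟩).symm
  conv_lhs => rw [hx']
  rw [Module.Basis.repr_self]

lemma mem_span_iff_repr (hR : IsRootSystem R) (hΔ : IsBase R Δ) (hJ : J ⊆ Δ) (v : V) :
    v ∈ Submodule.span ℝ J ↔ ∀ i : Δ, (i : V) ∉ J → (baseBasis hR hΔ).repr v i = 0 := by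
  classical
  constructor
  · intro hv
    induction hv using Submodule.span_induction with
    | mem x hx =>
        intro i hi
        rw [repr_simple hR hΔ (hJ hx), Finsupp.single_apply]
        split
        · next heq => exact absurd (heq ▸ hx) hi
        · rfl
    | zero => intro i _; simp
    | add x y _ _ ihx ihy =>
        intro i hi
        rw [map_add, Finsupp.add_apply, ihx i hi, ihy i hi, add_zero]
    | smul a x _ ihx =>
        intro i hi
        rw [map_smul, Finsupp.smul_apply, ihx i hi, smul_zero]
  · intro hv
    have hrepr := Module.Basis.linearCombination_repr (baseBasis hR hΔ) v
    rw [Finsupp.linearCombination_apply] at hrepr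
    rw [← hrepr]
    apply Submodule.finsuppSum_mem
    intro i hi
    have hiJ : (i : V) ∈ J := by
      by_contra hiJ
      exact hi (hv i hiJ)
    rw [baseBasis_apply]
    exact Submodule.smul_mem _ _ (Submodule.subset_span hiJ)

end Coord


section Simple
variable {R Δ J : Set V} [FiniteDimensional ℝ V]

lemma exists_other_coord (hR : IsRootSystem R) (hΔ : IsBase R Δ) {γ α : V} (hα : α ∈ Δ)
    (hγ : γ ∈ posRoots R Δ) (hne : γ ≠ α) :
    ∃ i : Δ, (i : V) ≠ α ∧ 0 < (baseBasis hR hΔ).repr γ i := by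
  classical
  by_contra hcon
  push_neg at hcon
  set b := baseBasis hR hΔ with hb
  set c := b.repr γ ⟨α, hα⟩ with hc
  have hγc : γ = c • α := by
    have h1 : b.repr γ = b.repr (c • α) := by
      rw [map_smul, repr_simple hR hΔ hα, Finsupp.smul_single, smul_eq_mul, mul_one]
      ext i
      by_cases hi : i = (⟨α, hα⟩ : Δ)
      · rw [hi, Finsupp.single_apply, if_pos rfl]
      · have hiv : (i : V) ≠ α := fun h => hi (Subtype.ext h)
        have hle : b.repr γ i ≤ 0 := hcon i hiv
        have hge : 0 ≤ b.repr γ i := repr_nonneg' hR hΔ hγ i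
        rw [Finsupp.single_apply, if_neg (fun h => hi h.symm)]
        linarith
    exact b.repr.injective h1
  have hcR : c • α ∈ R := hγc ▸ hγ.1
  rcases hR.reduced α (hΔ.subset hα) c hcR with h1 | h1
  · rw [h1, one_smul] at hγc
    exact hne hγc
  · rw [h1, neg_one_smul] at hγc
    have hnegγ : -γ ∈ posRoots R Δ := by
      rw [hγc, neg_neg]
      exact simple_mem_posRoots hΔ hα
    exact not_pos_and_neg hΔ hγ.1 hγ hnegγ

lemma refl_simple_pos (hR : IsRootSystem R) (hΔ : IsBase R Δ) {γ α : V} (hα : α ∈ Δ)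
    (hγ : γ ∈ posRoots R Δ) (hne : γ ≠ α) :
    reflEquiv α γ ∈ posRoots R Δ := by
  classical
  obtain ⟨i, hiα, hi⟩ := exists_other_coord hR hΔ hα hγ hne
  have hmem : reflEquiv α γ ∈ R := hR.refl_mem α (hΔ.subset hα) γ hγ.1
  apply pos_of_repr_pos hR hΔ hmem (i := i)
  rw [reflEquiv_apply, reflMap_apply, map_sub, map_smul, Finsupp.sub_apply, Finsupp.smul_apply,
    repr_simple hR hΔ hα, Finsupp.single_apply, if_neg (fun h => hiα (congrArg Subtype.val h).symm),
    smul_zero, sub_zero]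
  exact hi

lemma eq_simple_of_refl_neg (hR : IsRootSystem R) (hΔ : IsBase R Δ) {γ α : V} (hα : α ∈ Δ)
    (hγ : γ ∈ posRoots R Δ) (h : reflEquiv α γ ∉ posRoots R Δ) : γ = α := by
  by_contra hne
  exact h (refl_simple_pos hR hΔ hα hγ hne)

end Simple


section Height
variable {R Δ J : Set V} [FiniteDimensional ℝ V]

/-- The height functional: the sum of the coordinates in the basis `Δ`. -/
noncomputable def htF (hR : IsRootSystem R) (hΔ : IsBase R Δ) : V →ₗ[ℝ] ℝ :=
  (baseBasis hR hΔ).constr ℝ (fun _ => (1 : ℝ))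

lemma htF_apply (hR : IsRootSystem R) (hΔ : IsBase R Δ) (v : V) :
    htF hR hΔ v = ((baseBasis hR hΔ).repr v).sum fun _ c => c := by
  rw [htF, Module.Basis.constr_apply]
  simp

lemma htF_simple (hR : IsRootSystem R) (hΔ : IsBase R Δ) {α : V} (hα : α ∈ Δ) :
    htF hR hΔ α = 1 := by
  have hx' : α = baseBasis hR hΔ ⟨α, hα⟩ := (baseBasis_apply hR hΔ ⟨α, hα⟩).symm
  conv_lhs => rw [hx']
  rw [htF, Module.Basis.constr_basis]

lemma htF_pos (hR : IsRootSystem R) (hΔ : IsBase R Δ) {γ : V} (hγ : γ ∈ posRoots R Δ) :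
    0 < htF hR hΔ γ := by
  have hγ0 : γ ≠ 0 := fun h => hR.zero_not_mem (h ▸ hγ.1)
  have hr0 : (baseBasis hR hΔ).repr γ ≠ 0 := fun h => hγ0 (by
    have := congrArg (baseBasis hR hΔ).repr.symm h
    rwa [LinearEquiv.symm_apply_apply, map_zero] at this)
  obtain ⟨i, hi⟩ := Finsupp.ne_iff.mp hr0
  rw [Finsupp.coe_zero, Pi.zero_apply] at hi
  rw [htF_apply, Finsupp.sum]
  apply Finset.sum_pos'
  · intro j _
    exact repr_nonneg' hR hΔ hγ j
  · refine ⟨i, Finsupp.mem_support_iff.mpr hi, ?_⟩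
    exact lt_of_le_of_ne (repr_nonneg' hR hΔ hγ i) (Ne.symm hi)

lemma reflEquiv_mem_of_span_aux (hR : IsRootSystem R) (hΔ : IsBase R Δ) (hJ : J ⊆ Δ) :
    ∀ n : ℕ, ∀ γ : V, γ ∈ R → γ ∈ Submodule.span ℝ J → γ ∈ posRoots R Δ →
      htF hR hΔ γ ≤ n → reflEquiv γ ∈ weylGroup J := by
  intro n
  induction n with
  | zero =>
    intro γ _ _ hγp hht
    exact absurd hht (not_le.mpr (by exact_mod_cast htF_pos hR hΔ hγp))
  | succ n ih =>
    intro γ hγR hγs hγp hht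
    by_cases hγJ : γ ∈ J
    · exact Subgroup.subset_closure (reflEquiv_mem_gens hγJ)
    · set b := baseBasis hR hΔ with hb
      have hγ0 : γ ≠ 0 := fun h => hR.zero_not_mem (h ▸ hγR)
      have hγγ : 0 < ⟪γ, γ⟫ :=
        lt_of_le_of_ne real_inner_self_nonneg (fun h => hγ0 (inner_self_eq_zero.mp h.symm))
      -- write γ as a combination of basis vectors
      have hrepr := Module.Basis.linearCombination_repr b γ
      rw [Finsupp.linearCombination_apply] at hrepr
      have hbasis : ∀ j : Δ, b j = (j : V) := baseBasis_apply hR hΔ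
      have hsum : ⟪γ, γ⟫ = ∑ i ∈ (b.repr γ).support, (b.repr γ i) * ⟪(i : V), γ⟫ := by
        nth_rewrite 1 [← hrepr]
        rw [Finsupp.sum, sum_inner]
        apply Finset.sum_congr rfl
        intro i _
        rw [real_inner_smul_left, hbasis]
      -- find β ∈ J with positive inner product with γ
      have hex : ∃ i ∈ (b.repr γ).support, 0 < (b.repr γ i) * ⟪(i : V), γ⟫ := by
        by_contra hcon
        push_neg at hcon
        have : ⟪γ, γ⟫ ≤ 0 := hsum ▸ Finset.sum_nonpos hcon
        linarith
      obtain ⟨i, hisupp, hipos⟩ := hex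
      have hci : 0 ≤ b.repr γ i := repr_nonneg' hR hΔ hγp i
      have hinner : 0 < ⟪(i : V), γ⟫ := by
        rcases lt_or_ge 0 ⟪(i : V), γ⟫ with h | h
        · exact h
        · nlinarith
      have hβJ : (i : V) ∈ J := by
        by_contra hβJ
        exact Finsupp.mem_support_iff.mp hisupp ((mem_span_iff_repr hR hΔ hJ γ).mp hγs i hβJ)
      set β : V := (i : V) with hβ
      have hβΔ : β ∈ Δ := hJ hβJ
      have hβR : β ∈ R := hΔ.subset hβΔ
      have hβ0 : β ≠ 0 := fun h => hR.zero_not_mem (h ▸ hβR)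
      have hββ : 0 < ⟪β, β⟫ :=
        lt_of_le_of_ne real_inner_self_nonneg (fun h => hβ0 (inner_self_eq_zero.mp h.symm))
      have hγβ : γ ≠ β := fun h => hγJ (h ▸ hβJ)
      set γ' := reflEquiv β γ with hγ'
      have hγ'R : γ' ∈ R := hR.refl_mem β hβR γ hγR
      have hγ'p : γ' ∈ posRoots R Δ := refl_simple_pos hR hΔ hβΔ hγp hγβ
      set c : ℝ := 2 * ⟪γ, β⟫ / ⟪β, β⟫ with hc
      have hγ'eq : γ' = γ - c • β := rfl
      have hγ's : γ' ∈ Submodule.span ℝ J := by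
        rw [hγ'eq]
        exact Submodule.sub_mem _ hγs (Submodule.smul_mem _ _ (Submodule.subset_span hβJ))
      have hcpos : 0 < c := by
        rw [hc]
        apply div_pos _ hββ
        have hcomm := real_inner_comm γ β
        linarith
      have hc1 : 1 ≤ c := by
        obtain ⟨m, hm⟩ := hR.crystallographic β hβR γ hγR
        rw [hc, hm]
        rw [hc, hm] at hcpos
        have hm0 : (0 : ℤ) < m := by exact_mod_cast hcpos
        have hm1 : (1 : ℤ) ≤ m := hm0
        exact_mod_cast hm1
      have hht' : htF hR hΔ γ' ≤ n := by
        rw [hγ'eq, map_sub, map_smul, htF_simple hR hΔ hβΔ, smul_eq_mul, mul_one]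
        push_cast at hht ⊢
        linarith
      have hmem' : reflEquiv γ' ∈ weylGroup J := ih γ' hγ'R hγ's hγ'p hht'
      have hβmem : reflEquiv β ∈ weylGroup J :=
        Subgroup.subset_closure (reflEquiv_mem_gens hβJ)
      have hγeq : γ = reflEquiv β γ' := (reflMap_invol β γ).symm
      have hconj : reflEquiv γ = reflEquiv β * reflEquiv γ' * (reflEquiv β)⁻¹ := by
        conv_lhs => rw [hγeq]
        exact reflEquiv_conj (fun x y => reflMap_inner β x y) γ'
      rw [hconj]
      exact Subgroup.mul_mem _ (Subgroup.mul_mem _ hβmem hmem') (Subgroup.inv_mem _ hβmem)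

lemma reflEquiv_mem_weylGroup_span (hR : IsRootSystem R) (hΔ : IsBase R Δ) (hJ : J ⊆ Δ)
    {γ : V} (hγR : γ ∈ R) (hγs : γ ∈ Submodule.span ℝ J) : reflEquiv γ ∈ weylGroup J := by
  have key : ∀ δ : V, δ ∈ R → δ ∈ Submodule.span ℝ J → δ ∈ posRoots R Δ →
      reflEquiv δ ∈ weylGroup J := by
    intro δ h1 h2 h3
    obtain ⟨n, hn⟩ := exists_nat_ge (htF hR hΔ δ)
    exact reflEquiv_mem_of_span_aux hR hΔ hJ n δ h1 h2 h3 hn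
  rcases pos_or_neg hΔ hγR with hp | hp
  · exact key γ hγR hγs hp
  · have hneg : reflEquiv γ = reflEquiv (-γ) := by
      ext x
      exact (reflMap_neg γ x).symm
    rw [hneg]
    exact key (-γ) hp.1 (Submodule.neg_mem _ hγs) hp

end Height


section EqOne
variable {R Δ : Set V} [FiniteDimensional ℝ V]

/-- Scanning lemma: if a product of simple reflections sends a positive root to a
non-positive root, there is a position in the word where the sign flips. -/
lemma scan_lemma (hR : IsRootSystem R) (hΔ : IsBase R Δ) :
    ∀ (l : List (V ≃ₗ[ℝ] V)), (∀ g ∈ l, g ∈ gens Δ) → ∀ v : V, v ∈ posRoots R Δ →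
      l.prod v ∉ posRoots R Δ →
      ∃ p s r, l = p ++ s :: r ∧ s ∈ gens Δ ∧
        r.prod v ∈ posRoots R Δ ∧ s (r.prod v) ∉ posRoots R Δ := by
  intro l
  induction l with
  | nil =>
    intro _ v hv hnv
    rw [List.prod_nil] at hnv
    exact absurd hv hnv
  | cons g t ih =>
    intro hl v hv hnv
    rw [List.prod_cons] at hnv
    by_cases ht : t.prod v ∈ posRoots R Δ
    · refine ⟨[], g, t, rfl, hl g (List.mem_cons_self), ht, ?_⟩
      exact hnv
    · obtain ⟨p, s, r, heq, hs, h1, h2⟩ :=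
        ih (fun g hg => hl g (List.mem_cons_of_mem _ hg)) v hv ht
      exact ⟨g :: p, s, r, by rw [heq]; rfl, hs, h1, h2⟩

/-- A product of simple reflections sending every simple root to a positive root
is the identity. -/
lemma listProd_eq_one (hR : IsRootSystem R) (hΔ : IsBase R Δ) :
    ∀ n : ℕ, ∀ l : List (V ≃ₗ[ℝ] V), l.length ≤ n → (∀ g ∈ l, g ∈ gens Δ) →
      (∀ α ∈ Δ, l.prod α ∈ posRoots R Δ) → l.prod = 1 := by
  intro n
  induction n with
  | zero =>
    intro l hlen _ _
    rw [List.length_eq_zero_iff.mp (Nat.le_zero.mp hlen)]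
    rfl
  | succ n ih =>
    intro l hlen hl hpos
    rcases l.eq_nil_or_concat with rfl | ⟨init, gt, rfl⟩
    · rfl
    rw [List.concat_eq_append] at *
    obtain ⟨αt, hαt, hgt⟩ := hl gt (by simp)
    have hαtR : αt ∈ R := hΔ.subset hαt
    have hαt0 : αt ≠ 0 := fun h => hR.zero_not_mem (h ▸ hαtR)
    have hgt_eq : gt = reflEquiv αt := by ext x; exact hgt x
    have hinit : ∀ g ∈ init, g ∈ gens Δ := fun g hg => hl g (by simp [hg])
    have hw : (init ++ [gt]).prod = init.prod * gt := by
      rw [List.prod_append, List.prod_cons, List.prod_nil, mul_one]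
    have hu0R : init.prod αt ∈ R := listProd_maps_root hR hΔ.subset init hinit αt hαtR
    have hu0 : init.prod αt ∉ posRoots R Δ := by
      intro hcon
      have h1 : (init ++ [gt]).prod αt = -(init.prod αt) := by
        rw [hw]
        show init.prod (gt αt) = _
        rw [hgt_eq, reflEquiv_self αt hαt0, map_neg]
      have h2 := hpos αt hαt
      rw [h1] at h2
      exact not_pos_and_neg hΔ hu0R hcon h2
    obtain ⟨p, s, r, heq, hs, h1, h2⟩ :=
      scan_lemma hR hΔ init hinit αt (simple_mem_posRoots hΔ hαt) hu0
    have hp : ∀ g ∈ p, g ∈ gens Δ := fun g hg => hinit g (by rw [heq]; simp [hg])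
    have hr : ∀ g ∈ r, g ∈ gens Δ := fun g hg => hinit g (by rw [heq]; simp [hg])
    obtain ⟨β, hβ, hsβ⟩ := gens_eq_reflEquiv hs
    have hu_eq : r.prod αt = β := by
      refine eq_simple_of_refl_neg hR hΔ hβ h1 ?_
      rw [← hsβ]
      exact h2
    have hs_eq : s = reflEquiv (r.prod αt) := by rw [hu_eq]; exact hsβ
    have hconj : reflEquiv (r.prod αt) = r.prod * reflEquiv αt * (r.prod)⁻¹ :=
      reflEquiv_conj (listProd_inner r hr) αt
    have hsr : s * r.prod = r.prod * gt := by
      rw [hs_eq, hconj, ← hgt_eq, inv_mul_cancel_right]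
    have hgt2 : gt * gt = 1 := by rw [hgt_eq]; exact reflEquiv_mul_self αt
    have hprod : (init ++ [gt]).prod = (p ++ r).prod := by
      rw [hw, heq, List.prod_append, List.prod_cons, List.prod_append]
      rw [mul_assoc p.prod, hsr, ← mul_assoc p.prod, mul_assoc _ _ gt, mul_assoc r.prod,
        hgt2, mul_one]
    have hlen' : (p ++ r).length ≤ n := by
      have e1 : init.length = p.length + r.length + 1 := by rw [heq]; simp; omega
      have e2 : (init ++ [gt]).length = init.length + 1 := by simp
      rw [e2, e1] at hlen
      simp only [List.length_append]
      omega
    rw [hprod]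
    refine ih (p ++ r) hlen' ?_ ?_
    · intro g hg
      rcases List.mem_append.mp hg with h | h
      · exact hp g h
      · exact hr g h
    · intro α hα
      rw [← hprod]
      exact hpos α hα

lemma weylGroup_eq_one (hR : IsRootSystem R) (hΔ : IsBase R Δ) {w : V ≃ₗ[ℝ] V}
    (hw : w ∈ weylGroup Δ) (hpos : ∀ α ∈ Δ, w α ∈ posRoots R Δ) : w = 1 := by
  obtain ⟨l, hl, rfl⟩ := mem_weylGroup_iff.mp hw
  exact listProd_eq_one hR hΔ l.length l le_rfl hl hpos

/-- The full Weyl group is generated by the simple reflections. -/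
lemma weylGroup_le_weylGroup_base (hR : IsRootSystem R) (hΔ : IsBase R Δ) :
    weylGroup R ≤ weylGroup Δ := by
  refine Subgroup.closure_le _ |>.mpr ?_
  intro g hg
  obtain ⟨γ, hγ, rfl⟩ := gens_eq_reflEquiv hg
  have hsp : γ ∈ Submodule.span ℝ Δ := by
    have h := root_spans hR hΔ
    rw [Subtype.range_coe] at h
    exact h Submodule.mem_top
  exact reflEquiv_mem_weylGroup_span hR hΔ (le_refl Δ) hγ hsp

end EqOne


section MainAux
variable {R Δ J₀ : Set V} [FiniteDimensional ℝ V]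

/-- The set of positive roots sent to negative roots by `w`. -/
def NegSet (R Δ : Set V) (w : V ≃ₗ[ℝ] V) : Set V :=
  {γ | γ ∈ posRoots R Δ ∧ -(w γ) ∈ posRoots R Δ}

lemma negSet_finite (hR : IsRootSystem R) (w : V ≃ₗ[ℝ] V) : (NegSet R Δ w).Finite :=
  hR.finite.subset (fun _ hγ => hγ.1.1)

lemma negSet_card_lt (hR : IsRootSystem R) (hΔ : IsBase R Δ) {w : V ≃ₗ[ℝ] V}
    (hwW : w ∈ weylGroup R) {α : V} (hα : α ∈ Δ) (hneg : -(w α) ∈ posRoots R Δ) :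
    (NegSet R Δ (w * reflEquiv α)).ncard < (NegSet R Δ w).ncard := by
  have hαR : α ∈ R := hΔ.subset hα
  have hα0 : α ≠ 0 := fun h => hR.zero_not_mem (h ▸ hαR)
  have hBfin : (NegSet R Δ w).Finite := negSet_finite hR w
  have himg : (reflEquiv α) '' (NegSet R Δ (w * reflEquiv α)) ⊆ NegSet R Δ w \ {α} := by
    rintro _ ⟨γ, ⟨hγp, hγn⟩, rfl⟩
    have hγα : γ ≠ α := by
      intro heq
      have h1 : (w * reflEquiv α) γ = -(w α) := by
        show w (reflEquiv α γ) = _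
        rw [heq, reflEquiv_self α hα0, map_neg]
      rw [h1, neg_neg] at hγn
      exact not_pos_and_neg hΔ (weylGroup_maps_root hR (subset_refl R) hwW hαR) hγn hneg
    refine ⟨⟨refl_simple_pos hR hΔ hα hγp hγα, hγn⟩, ?_⟩
    intro hmem
    rw [Set.mem_singleton_iff] at hmem
    have hγeq : γ = -α := by
      calc γ = reflEquiv α (reflEquiv α γ) := (reflMap_invol α γ).symm
        _ = reflEquiv α α := by rw [hmem]
        _ = -α := reflEquiv_self α hα0
    rw [hγeq] at hγp
    exact not_pos_and_neg hΔ hγp.1 hγp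
      (by rw [neg_neg]; exact simple_mem_posRoots hΔ hα)
  have hαmem : α ∈ NegSet R Δ w := ⟨simple_mem_posRoots hΔ hα, hneg⟩
  calc (NegSet R Δ (w * reflEquiv α)).ncard
      = ((reflEquiv α) '' (NegSet R Δ (w * reflEquiv α))).ncard :=
        (Set.ncard_image_of_injective _ (reflEquiv α).injective).symm
    _ ≤ (NegSet R Δ w \ {α}).ncard := Set.ncard_le_ncard himg hBfin.diff
    _ < (NegSet R Δ w).ncard := Set.ncard_diff_singleton_lt_of_mem hαmem hBfin

lemma mem_weylGroupJ_of_sneg_empty (hR : IsRootSystem R) (hΔ : IsBase R Δ) (hJ₀ : J₀ ⊆ Δ) :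
    ∀ n : ℕ, ∀ w : V ≃ₗ[ℝ] V, w ∈ weylGroup R → (NegSet R Δ w).ncard ≤ n →
      Sneg R Δ J₀ w = ∅ → w ∈ weylGroup J₀ := by
  intro n
  induction n with
  | zero =>
    intro w hwW hcard _
    by_cases hex : ∃ α ∈ Δ, -(w α) ∈ posRoots R Δ
    · obtain ⟨α, hα, hneg⟩ := hex
      have hαmem : α ∈ NegSet R Δ w := ⟨simple_mem_posRoots hΔ hα, hneg⟩
      have := (Set.ncard_pos (negSet_finite hR w)).mpr ⟨α, hαmem⟩
      omega
    · push_neg at hex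
      have hpos : ∀ α ∈ Δ, w α ∈ posRoots R Δ := by
        intro α hα
        have hwαR : w α ∈ R := weylGroup_maps_root hR (subset_refl R) hwW (hΔ.subset hα)
        rcases pos_or_neg hΔ hwαR with h | h
        · exact h
        · exact absurd h (hex α hα)
      have : w = 1 := weylGroup_eq_one hR hΔ (weylGroup_le_weylGroup_base hR hΔ hwW) hpos
      rw [this]
      exact Subgroup.one_mem _
  | succ n ih =>
    intro w hwW hcard hS
    by_cases hex : ∃ α ∈ Δ, -(w α) ∈ posRoots R Δ
    · obtain ⟨α, hα, hneg⟩ := hex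
      have hαR : α ∈ R := hΔ.subset hα
      have hwα_rootsIn : w α ∈ rootsIn R J₀ := by
        by_contra hnot
        have : α ∈ Sneg R Δ J₀ w := ⟨hα, hneg, hnot⟩
        rw [hS] at this
        exact this
      have hwαR : w α ∈ R := hwα_rootsIn.1
      have hwαspan : w α ∈ Submodule.span ℝ J₀ := hwα_rootsIn.2
      have hsrefl : reflEquiv (w α) ∈ weylGroup J₀ :=
        reflEquiv_mem_weylGroup_span hR hΔ hJ₀ hwαR hwαspan
      set w'' := w * reflEquiv α with hw''
      have hw''W : w'' ∈ weylGroup R :=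
        Subgroup.mul_mem _ hwW (Subgroup.subset_closure (reflEquiv_mem_gens hαR))
      have hkey : reflEquiv (w α) * w = w'' := by
        rw [hw'', reflEquiv_conj (fun x y => weylGroup_inner hwW x y) α,
          inv_mul_cancel_right]
      have hcard'' : (NegSet R Δ w'').ncard ≤ n := by
        have hlt := negSet_card_lt hR hΔ hwW hα hneg
        rw [← hw''] at hlt
        omega
      have hS'' : Sneg R Δ J₀ w'' = ∅ := by
        rw [Set.eq_empty_iff_forall_notMem]
        rintro β ⟨hβΔ, hβneg, hβnotin⟩
        have hβR : β ∈ R := hΔ.subset hβΔ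
        have huR : w β ∈ R := weylGroup_maps_root hR (subset_refl R) hwW hβR
        have hw''β : w'' β = reflEquiv (w α) (w β) := by rw [← hkey]; rfl
        have hw''βR : w'' β ∈ R := weylGroup_maps_root hR (subset_refl R) hw''W hβR
        by_cases huspan : w β ∈ Submodule.span ℝ J₀
        · apply hβnotin
          refine ⟨hw''βR, ?_⟩
          rw [hw''β, reflEquiv_apply, reflMap_apply]
          exact Submodule.sub_mem _ huspan (Submodule.smul_mem _ _ hwαspan)
        · have hunotin : w β ∉ rootsIn R J₀ := fun h => huspan h.2
          have hβnot : β ∉ Sneg R Δ J₀ w := by rw [hS]; exact fun h => h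
          have hupos : w β ∈ posRoots R Δ := by
            rcases pos_or_neg hΔ huR with h | h
            · exact h
            · exact absurd ⟨hβΔ, h, hunotin⟩ hβnot
          obtain ⟨i, hiJ, hine⟩ : ∃ i : Δ, (i : V) ∉ J₀ ∧
              (baseBasis hR hΔ).repr (w β) i ≠ 0 := by
            by_contra hcon
            push_neg at hcon
            exact huspan ((mem_span_iff_repr hR hΔ hJ₀ (w β)).mpr
              (fun i hi => hcon i hi))
          have hipos : 0 < (baseBasis hR hΔ).repr (w β) i :=
            lt_of_le_of_ne (repr_nonneg' hR hΔ hupos i) (Ne.symm hine)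
          have hrwα : (baseBasis hR hΔ).repr (w α) i = 0 :=
            (mem_span_iff_repr hR hΔ hJ₀ (w α)).mp hwαspan i hiJ
          have hrepr'' : (baseBasis hR hΔ).repr (w'' β) i
              = (baseBasis hR hΔ).repr (w β) i := by
            rw [hw''β, reflEquiv_apply, reflMap_apply, map_sub, map_smul,
              Finsupp.sub_apply, Finsupp.smul_apply, hrwα, smul_zero, sub_zero]
          have : 0 ≤ (baseBasis hR hΔ).repr (-(w'' β)) i := repr_nonneg' hR hΔ hβneg i
          rw [map_neg, Finsupp.neg_apply, hrepr''] at this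
          linarith
      have hw''J : w'' ∈ weylGroup J₀ := ih w'' hw''W hcard'' hS''
      have hweq : w = (reflEquiv (w α))⁻¹ * w'' := eq_inv_mul_iff_mul_eq.mpr hkey
      rw [hweq]
      exact Subgroup.mul_mem _ (Subgroup.inv_mem _ hsrefl) hw''J
    · push_neg at hex
      have hpos : ∀ α ∈ Δ, w α ∈ posRoots R Δ := by
        intro α hα
        have hwαR : w α ∈ R := weylGroup_maps_root hR (subset_refl R) hwW (hΔ.subset hα)
        rcases pos_or_neg hΔ hwαR with h | h
        · exact h
        · exact absurd h (hex α hα)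
      have : w = 1 := weylGroup_eq_one hR hΔ (weylGroup_le_weylGroup_base hR hΔ hwW) hpos
      rw [this]
      exact Subgroup.one_mem _

end MainAux

/-- §9.2, Lemma on the partition of `Δ`, part (1):
for every `w ∈ W`, the set `S_w⁻` is empty if and only if `w ∈ W_{J₀}`. -/
theorem Sneg_empty_iff_mem_weylGroup
    [FiniteDimensional ℝ V] (R Δ J₀ : Set V)
    (hR : IsRootSystem R) (hΔ : IsBase R Δ) (hJ₀ : J₀ ⊆ Δ)
    (w : V ≃ₗ[ℝ] V) (hw : w ∈ weylGroup R) :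
    Sneg R Δ J₀ w = ∅ ↔ w ∈ weylGroup J₀ := by
  classical
  constructor
  · intro hempty
    exact mem_weylGroupJ_of_sneg_empty hR hΔ hJ₀ (NegSet R Δ w).ncard w hw le_rfl hempty
  · intro hwJ
    rw [Set.eq_empty_iff_forall_notMem]
    rintro α ⟨hαΔ, hαneg, hαnotin⟩
    have hαR : α ∈ R := hΔ.subset hαΔ
    have hwR : w ∈ weylGroup R := weylGroup_mono (fun x hx => hΔ.subset (hJ₀ hx)) hwJ
    have hwαR : w α ∈ R := weylGroup_maps_root hR (subset_refl R) hwR hαR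
    have hmove : w α - α ∈ Submodule.span ℝ J₀ := weylGroup_apply_sub_mem_span hwJ α
    by_cases hαJ : α ∈ J₀
    · apply hαnotin
      refine ⟨hwαR, ?_⟩
      have : w α = α + (w α - α) := by abel
      rw [this]
      exact Submodule.add_mem _ (Submodule.subset_span hαJ) hmove
    · set i : Δ := ⟨α, hαΔ⟩ with hi
      have h1 : (baseBasis hR hΔ).repr α i = 1 := by
        rw [repr_simple hR hΔ hαΔ, Finsupp.single_apply, if_pos rfl]
      have h2 : (baseBasis hR hΔ).repr (w α - α) i = 0 :=
        (mem_span_iff_repr hR hΔ hJ₀ (w α - α)).mp hmove i hαJ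
      have h3 : (baseBasis hR hΔ).repr (w α) i = 1 := by
        have : w α = α + (w α - α) := by abel
        rw [this, map_add, Finsupp.add_apply, h1, h2, add_zero]
      have hwαpos : w α ∈ posRoots R Δ :=
        pos_of_repr_pos hR hΔ hwαR (i := i) (by rw [h3]; norm_num)
      exact not_pos_and_neg hΔ hwαR hwαpos hαneg
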